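/- Let S be a profinite monoid, V a pseudovariety of finite monoids (nonempty class closed under homomorphic images, submonoids, and finite products), and suppose S is residually in V (distinct points are separated by continuous homomorphisms onto members of V). Then every finite monoid that is a continuous homomorphic image of S belongs to V. -/

import Mathlib

/-- If `S` is a profinite monoid residually in a pseudovariety `V` of finite
monoids, then every finite continuous homomorphic image of `S` belongs to `V`. -/
theorem finite_continuous_image_mem_pseudovariety
    (V : ∀ (M : Type), Monoid M → Prop)
    -- V consists of finite monoids
    (hVfin : ∀ (M : Type) (iM : Monoid M), V M iM → Finite M)
    -- V is nonempty
    (hVne : ∃ (M : Type) (iM : Monoid M), V M iM)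
    -- V is closed under homomorphic images
    (hVimg : ∀ (M N : Type) (iM : Monoid M) (iN : Monoid N)
      (f : @MonoidHom M N iM.toMulOneClass.toMulOne iN.toMulOneClass.toMulOne),
      Function.Surjective f → V M iM → V N iN)
    -- V is closed under submonoids
    (hVsub : ∀ (M : Type) (iM : Monoid M) (N : @Submonoid M iM.toMulOneClass),
      V M iM → V N inferInstance)
    -- V is closed under finite (binary) direct products
    (hVprod : ∀ (M N : Type) (iM : Monoid M) (iN : Monoid N),
      V M iM → V N iN → V (M × N) inferInstance)
    -- S is a profinite monoid
    (S : Type) [Monoid S] [TopologicalSpace S] [CompactSpace S] [T2Space S]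
    [TotallyDisconnectedSpace S] [ContinuousMul S]
    -- S is residually in V
    (hres : ∀ x y : S, x ≠ y → ∃ (T : Type) (iT : Monoid T)
      (φ : @MonoidHom S T _ iT.toMulOneClass.toMulOne), V T iT ∧
        @Continuous S T _ ⊥ φ ∧ φ x ≠ φ y)
    -- conclusion: finite continuous homomorphic images of S are in V
    (T : Type) (iT : Monoid T) (_ : Finite T)
    (φ : @MonoidHom S T _ iT.toMulOneClass.toMulOne)
    (hφc : @Continuous S T _ ⊥ φ) (hφs : Function.Surjective φ) :
    V T iT := by
  letI : Monoid T := iT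
  classical
  letI : TopologicalSpace T := ⊥
  haveI : DiscreteTopology T := ⟨rfl⟩
  set K : Set (S × S) := {q | φ q.1 ≠ φ q.2} with hK
  have hKcl : IsClosed K := by
    have hc : Continuous fun q : S × S => (φ q.1, φ q.2) :=
      (hφc.comp continuous_fst).prodMk (hφc.comp continuous_snd)
    have : K = (fun q : S × S => (φ q.1, φ q.2)) ⁻¹' {r : T × T | r.1 ≠ r.2} := rfl
    rw [this]
    exact (isClosed_discrete _).preimage hc
  have hKcomp : IsCompact K := hKcl.isCompact
  -- pointwise separating open sets
  have key : ∀ p : S × S, ∃ U : Set (S × S), IsOpen U ∧ (p ∈ K → p ∈ U) ∧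
      ∃ (M : Type) (iM : Monoid M) (ψ : @MonoidHom S M _ iM.toMulOneClass.toMulOne),
        V M iM ∧ ∀ q ∈ U, ψ q.1 ≠ ψ q.2 := by
    intro p
    by_cases hp : p ∈ K
    · have hne : p.1 ≠ p.2 := fun h => hp (by simp only [hK, Set.mem_setOf_eq, h, ne_eq,
        not_true_eq_false, not_false_eq_true] at * )
      obtain ⟨M, iM, ψ, hMV, hψc, hψne⟩ := hres p.1 p.2 hne
      letI := iM
      letI : TopologicalSpace M := ⊥
      haveI : DiscreteTopology M := ⟨rfl⟩
      refine ⟨{q | ψ q.1 ≠ ψ q.2}, ?_, fun _ => hψne, M, iM, ψ, hMV, fun q hq => hq⟩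
      have hc : Continuous fun q : S × S => (ψ q.1, ψ q.2) :=
        (hψc.comp continuous_fst).prodMk (hψc.comp continuous_snd)
      have heq : {q : S × S | ψ q.1 ≠ ψ q.2}
          = (fun q : S × S => (ψ q.1, ψ q.2)) ⁻¹' {r : M × M | r.1 ≠ r.2} := rfl
      rw [heq]
      exact (isOpen_discrete _).preimage hc
    · obtain ⟨M, iM, hM⟩ := hVne
      letI := iM
      exact ⟨∅, isOpen_empty, fun h => absurd h hp, M, iM, 1, hM, fun q hq => hq.elim⟩
  choose U hUopen hUmem M iM ψ hMV hψsep using key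
  -- finite subcover
  obtain ⟨t, ht⟩ := hKcomp.elim_finite_subcover U hUopen
    (fun p hp => Set.mem_iUnion.2 ⟨p, hUmem p hp⟩)
  -- build a single separating hom by induction on t
  have main : ∀ u : Finset (S × S), ∃ (Q : Type) (iQ : Monoid Q)
      (Ψ : @MonoidHom S Q _ iQ.toMulOneClass.toMulOne),
      V Q iQ ∧ ∀ q ∈ ⋃ p ∈ u, U p, Ψ q.1 ≠ Ψ q.2 := by
    intro u
    induction u using Finset.induction_on with
    | empty =>
        obtain ⟨Q, iQ, hQ⟩ := hVne
        letI := iQ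
        exact ⟨Q, iQ, 1, hQ, by simp⟩
    | @insert a s ha ih =>
        obtain ⟨Q, iQ, Ψ, hQV, hsep⟩ := ih
        letI := iQ
        letI := iM a
        refine ⟨M a × Q, inferInstance, (ψ a).prod Ψ, hVprod _ _ _ _ (hMV a) hQV, ?_⟩
        intro q hq
        rw [Finset.set_biUnion_insert] at hq
        rcases hq with hq | hq
        · intro h
          exact hψsep a q hq (congrArg Prod.fst h)
        · intro h
          exact hsep q hq (congrArg Prod.snd h)
  obtain ⟨Q, iQ, Ψ, hQV, hsep⟩ := main t
  letI := iQ
  have hker : ∀ a b : S, Ψ a = Ψ b → φ a = φ b := by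
    intro a b h
    by_contra hab
    exact hsep (a, b) (ht hab) h
  have hle : Con.ker Ψ ≤ Con.ker φ := fun {a b} h => hker a b h
  let f : (Con.ker Ψ).Quotient →* T := Con.lift _ φ hle
  have hfs : Function.Surjective f := by
    intro y
    obtain ⟨s, hs⟩ := hφs y
    exact ⟨(s : (Con.ker Ψ).Quotient), by simpa [f] using hs⟩
  let e := Con.quotientKerEquivRange Ψ
  let g : MonoidHom.mrange Ψ →* T := f.comp e.symm.toMonoidHom
  have hgs : Function.Surjective g := hfs.comp e.symm.surjective
  exact hVimg (MonoidHom.mrange Ψ) T inferInstance iT g hgs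
    (hVsub Q iQ (MonoidHom.mrange Ψ) hQV)
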